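/- If L is a projective line over the Puiseux series field with equation l x + l' y + l'' z = 0 where l, l', l'' are all nonzero, and P = [0 : a : b] with a, b ≠ 0 lies on L, then for every sufficiently large real number M there is a point Q ∈ L with all three coordinates nonzero whose tropicalization is [-M : T(a) : T(b)]; in particular T(L ∩ (K*)³) contains the ray {[t : T(a/b) : 0] : t ≤ -M₀} for some M₀. -/

import Mathlib

/-- Tropicalization map on the field of Puiseux series (modelled as `HahnSeries ℝ ℂ`). -/
noncomputable def T (x : HahnSeries ℝ ℂ) : ℝ := -x.order

private lemma order_add_eq_left' {x y : HahnSeries ℝ ℂ} (hx : x ≠ 0) (hy : y ≠ 0)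
    (h : x.order < y.order) : x + y ≠ 0 ∧ (x + y).order = x.order := by
  have hot : x.orderTop < y.orderTop := by
    rw [← HahnSeries.order_eq_orderTop_of_ne_zero hx, ← HahnSeries.order_eq_orderTop_of_ne_zero hy]
    exact_mod_cast h
  have hxy := HahnSeries.orderTop_add_eq_left hot
  have hne : x + y ≠ 0 := by
    intro h0
    rw [h0, HahnSeries.orderTop_zero, HahnSeries.orderTop_of_ne_zero hx] at hxy
    exact (WithTop.coe_ne_top hxy.symm)
  refine ⟨hne, ?_⟩
  rw [← HahnSeries.order_eq_orderTop_of_ne_zero hne, ← HahnSeries.order_eq_orderTop_of_ne_zero hx] at hxy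
  exact_mod_cast hxy

theorem ray_in_tropicalization
    (l l' l'' : HahnSeries ℝ ℂ) (hl : l ≠ 0) (hl' : l' ≠ 0) (hl'' : l'' ≠ 0)
    (a b : HahnSeries ℝ ℂ) (ha : a ≠ 0) (hb : b ≠ 0)
    (hP : l * 0 + l' * a + l'' * b = 0) :
    ∃ M₀ : ℝ, ∀ M : ℝ, M₀ < M →
      ∃ q : Fin 3 → HahnSeries ℝ ℂ,
        (∀ i, q i ≠ 0) ∧
        l * q 0 + l' * q 1 + l'' * q 2 = 0 ∧
        ∃ lam : ℝ, T (q 0) = -M + lam ∧ T (q 1) = T a + lam ∧ T (q 2) = T b + lam := by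
  set c : HahnSeries ℝ ℂ := l * l'⁻¹ with hc
  have hcne : c ≠ 0 := mul_ne_zero hl (inv_ne_zero hl')
  refine ⟨a.order - c.order, fun M hM => ?_⟩
  set x0 : HahnSeries ℝ ℂ := HahnSeries.single M (1 : ℂ) with hx0
  have hx0ne : x0 ≠ 0 := by
    simp [hx0, HahnSeries.single_ne_zero]
  have hx0ord : x0.order = M := HahnSeries.order_single one_ne_zero
  have hcx0ne : c * x0 ≠ 0 := mul_ne_zero hcne hx0ne
  have hcx0ord : (c * x0).order = c.order + M := by
    rw [HahnSeries.order_mul hcne hx0ne, hx0ord]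
  have hlt : a.order < (-(c * x0)).order := by
    rw [HahnSeries.order_neg, hcx0ord]; linarith
  obtain ⟨hq1ne, hq1ord⟩ := order_add_eq_left' ha (neg_ne_zero.mpr hcx0ne) hlt
  refine ⟨![x0, a + -(c * x0), b], ?_, ?_, 0, ?_, ?_, ?_⟩
  · intro i
    fin_cases i
    · simpa using hx0ne
    · simpa using hq1ne
    · simpa using hb
  · show l * x0 + l' * (a + -(c * x0)) + l'' * b = 0
    have h2 : l' * (c * x0) = l * x0 := by
      rw [hc, mul_comm l l'⁻¹, ← mul_assoc, ← mul_assoc, mul_inv_cancel₀ hl', one_mul]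
    linear_combination hP - h2
  · show T x0 = -M + 0
    simp [T, hx0ord]
  · show T (a + -(c * x0)) = T a + 0
    simp [T, hq1ord]
  · simp [T]
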